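/- (Taut) Every tautologous formula is deducible: if a formula s is a substitution instance of a valid propositional formula, then ∅ ⊢ s. -/

import Mathlib

namespace PTT


/-- Simple types over a single base type `B`. -/
inductive Ty : Type
  | base : Ty
  | arrow : Ty → Ty → Ty
deriving DecidableEq

/-- Names: the constants `⊥` and `→`, and variables (an index together with a type). -/
inductive Name : Type
  | bot : Name
  | imp : Name
  | var : ℕ → Ty → Name
deriving DecidableEq

/-- The type of a name. -/
def Name.ty : Name → Ty
  | .bot => .base
  | .imp => .arrow .base (.arrow .base .base)
  | .var _ σ => σ

/-- Terms: names, abstraction over a variable, application. -/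
inductive Tm : Type
  | name : Name → Tm
  | lam : ℕ → Ty → Tm → Tm
  | app : Tm → Tm → Tm
deriving DecidableEq

/-- The term `⊥`. -/
def botTm : Tm := .name .bot

/-- The variable `(n, σ)` as a term. -/
def vr (n : ℕ) (σ : Ty) : Tm := .name (.var n σ)

/-- Implication `s → t`. -/
def impTm (s t : Tm) : Tm := .app (.app (.name .imp) s) t

/-- `⊤ := ⊥ → ⊥`. -/
def topTm : Tm := impTm botTm botTm

/-- `¬ s := s → ⊥`. -/
def negTm (s : Tm) : Tm := impTm s botTm

/-- `s ∨ t := (s → t) → t`. -/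
def orTm (s t : Tm) : Tm := impTm (impTm s t) t

/-- `s ∧ t := ¬(¬s ∨ ¬t)`. -/
def andTm (s t : Tm) : Tm := negTm (orTm (negTm s) (negTm t))

/-- `s ≡ t := (s → t) ∧ (t → s)`. -/
def equivTm (s t : Tm) : Tm := andTm (impTm s t) (impTm t s)

/-- The typing relation. -/
inductive HasTy : Tm → Ty → Prop
  | name (x : Name) : HasTy (.name x) x.ty
  | lam {n σ s τ} : HasTy s τ → HasTy (.lam n σ s) (.arrow σ τ)
  | app {s t σ τ} : HasTy s (.arrow σ τ) → HasTy t σ → HasTy (.app s t) τ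

/-- Free variables of a term. -/
def fv : Tm → Finset (ℕ × Ty)
  | .name (.var n σ) => {(n, σ)}
  | .name _ => ∅
  | .lam n σ s => (fv s).erase (n, σ)
  | .app s t => fv s ∪ fv t

/-- A term is closed if it has no free variables. -/
def Closed (s : Tm) : Prop := fv s = ∅

/-- Capture-free parallel substitution (bound variables are renamed). -/
def substAux (ρ : ℕ × Ty → Tm) : Tm → Tm
  | .name (.var n σ) => ρ (n, σ)
  | .name x => .name x
  | .app s t => .app (substAux ρ s) (substAux ρ t)
  | .lam n σ s =>
      let used : Finset ℕ :=
        ((fv s).erase (n, σ)).biUnion (fun p => (fv (ρ p)).image Prod.fst)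
      let m : ℕ := used.sup id + 1
      .lam m σ (substAux (Function.update ρ (n, σ) (vr m σ)) s)

/-- Capture-free substitution `s[(n,σ) := t]`. -/
def subst (s : Tm) (n : ℕ) (σ : Ty) (t : Tm) : Tm :=
  substAux (Function.update (fun p => vr p.1 p.2) (n, σ) t) s

/-- Contexts: terms with exactly one hole (possibly under binders). -/
inductive Ctx : Type
  | hole : Ctx
  | lam : ℕ → Ty → Ctx → Ctx
  | appL : Ctx → Tm → Ctx
  | appR : Tm → Ctx → Ctx

/-- Filling the hole of a context with a term (capturing is allowed). -/
def Ctx.fill : Ctx → Tm → Tm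
  | .hole, s => s
  | .lam n σ C, s => .lam n σ (C.fill s)
  | .appL C t, s => .app (C.fill s) t
  | .appR t C, s => .app t (C.fill s)

/-- `C` captures the variable `p` if the hole of `C` lies below a binder for `p`. -/
def Ctx.captures : Ctx → ℕ × Ty → Prop
  | .hole, _ => False
  | .lam n σ C, p => p = (n, σ) ∨ C.captures p
  | .appL C _, p => C.captures p
  | .appR _ C, p => C.captures p

/-- `C` is admissible for `A` if it captures no variable free in `A`. -/
def Ctx.Admissible (C : Ctx) (A : Finset Tm) : Prop :=
  ∀ p ∈ A.biUnion fv, ¬ C.captures p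

/-- `s` is a subterm of `t`. -/
def Subterm (s t : Tm) : Prop := ∃ C : Ctx, C.fill s = t

/-- β-redexes. -/
def IsBetaRedex : Tm → Prop
  | .app (.lam _ _ _) _ => True
  | _ => False

/-- A term is β-normal if none of its subterms is a β-redex. -/
def BetaNormal (t : Tm) : Prop := ∀ s, Subterm s t → ¬ IsBetaRedex s

/-- Lambda equivalence: the least equivalence on well-typed terms containing
α-, β-, η-conversion and closed under arbitrary contexts. -/
inductive LamEq : Tm → Tm → Prop
  | refl {s σ} : HasTy s σ → LamEq s s
  | symm {s t} : LamEq s t → LamEq t s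
  | trans {s t u} : LamEq s t → LamEq t u → LamEq s u
  | alpha {n m σ s τ} : HasTy (.lam n σ s) τ → (m, σ) ∉ fv s →
      LamEq (.lam n σ s) (.lam m σ (subst s n σ (vr m σ)))
  | beta {n σ s t τ} : HasTy (.app (.lam n σ s) t) τ →
      LamEq (.app (.lam n σ s) t) (subst s n σ t)
  | eta {n σ s τ} : HasTy (.lam n σ (.app s (vr n σ))) τ → (n, σ) ∉ fv s →
      LamEq (.lam n σ (.app s (vr n σ))) s
  | ctx {s t σ} (C : Ctx) : LamEq s t → HasTy (C.fill s) σ → LamEq (C.fill s) (C.fill t)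

/-- The standard set-theoretic interpretation of types: `B` is interpreted as the
two truth values (`Bool`), functional types as full function spaces. -/
def Ty.sem : Ty → Type
  | .base => Bool
  | .arrow σ τ => σ.sem → τ.sem

def Ty.semDefault : (σ : Ty) → σ.sem
  | .base => false
  | .arrow _ τ => fun _ => τ.semDefault

instance (σ : Ty) : Inhabited σ.sem := ⟨σ.semDefault⟩

noncomputable instance Ty.semFintype : (σ : Ty) → Fintype σ.sem
  | .base => inferInstanceAs (Fintype Bool)
  | .arrow σ τ =>
      letI := Ty.semFintype σ
      letI := Ty.semFintype τ
      letI := Classical.decEq σ.sem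
      inferInstanceAs (Fintype (σ.sem → τ.sem))

def Ty.semCast {σ τ : Ty} (h : σ = τ) (v : σ.sem) : τ.sem := h ▸ v

/-- An interpretation assigns to every variable a value of the corresponding type
(the constants `⊥` and `→` have their values fixed). -/
def Interp : Type := ℕ → (σ : Ty) → σ.sem

def Interp.update (I : Interp) (n : ℕ) (σ : Ty) (v : σ.sem) : Interp :=
  fun m τ => if h : m = n ∧ τ = σ then Ty.semCast h.2.symm v else I m τ

/-- Type inference. -/
def typeOf : Tm → Option Ty
  | .name x => some x.ty
  | .lam _ σ s => (typeOf s).map (Ty.arrow σ)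
  | .app s t =>
      match typeOf s, typeOf t with
      | some (.arrow σ τ), some σ' => if σ = σ' then some τ else none
      | _, _ => none

/-- The canonical extension `Î` of an interpretation to all terms: `eval I s σ`
is the value of `s` at type `σ` (on well-typed terms this is the usual
denotation; junk default values are used at type mismatches). -/
def eval (I : Interp) : Tm → (σ : Ty) → σ.sem
  | .name (.var n τ), σ => if h : τ = σ then Ty.semCast h (I n τ) else default
  | .name .bot, σ =>
      match σ with
      | .base => false
      | _ => default
  | .name .imp, σ =>
      match σ with
      | .arrow .base (.arrow .base .base) => fun a b => !a || b
      | _ => default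
  | .app s t, σ =>
      match typeOf t with
      | some τ => eval I s (.arrow τ σ) (eval I t τ)
      | none => default
  | .lam n τ s, σ =>
      match σ with
      | .base => default
      | .arrow σ₁ σ₂ =>
          if h : σ₁ = τ then
            fun a => eval (I.update n τ (Ty.semCast h a)) s σ₂
          else default

/-- `I` satisfies the formula `s` if `Î s = 1`. -/
def Satisfies (I : Interp) (s : Tm) : Prop := eval I s .base = true

/-- A formula is valid if every interpretation satisfies it. -/
def ValidFml (s : Tm) : Prop := ∀ I : Interp, Satisfies I s

/-- A sequent `A ⇒ s` is valid if every interpretation satisfying `A` satisfies `s`. -/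
def ValidSeq (A : Finset Tm) (s : Tm) : Prop :=
  ∀ I : Interp, (∀ t ∈ A, Satisfies I t) → Satisfies I s

/-- Finite disjunction (the empty disjunction is `⊥`). -/
def orList : List Tm → Tm
  | [] => botTm
  | [s] => s
  | s :: l => orTm s (orList l)

/-- Finite conjunction (the empty conjunction is `⊤`). -/
def andList : List Tm → Tm
  | [] => topTm
  | [s] => s
  | s :: l => andTm s (andList l)

/-- The argument types of a type (every type has the form `σ₁…σₙB`). -/
def Ty.args : Ty → List Ty
  | .base => []
  | .arrow σ τ => σ :: τ.args

/-- Tuples of values along a list of types. -/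
def Tup : List Ty → Type
  | [] => PUnit
  | σ :: l => σ.sem × Tup l

noncomputable instance TupFintype : (l : List Ty) → Fintype (Tup l)
  | [] => inferInstanceAs (Fintype PUnit)
  | σ :: l =>
      letI := TupFintype l
      inferInstanceAs (Fintype (σ.sem × Tup l))

/-- Applying a function value to a tuple of arguments (the result type is `B`). -/
def Ty.applyTup : (σ : Ty) → σ.sem → Tup σ.args → Bool
  | .base, a, _ => a
  | .arrow _ τ, f, p => τ.applyTup (f p.1) p.2

/-- Quote/identity data for each type in a list: a quote function and the term `≐`. -/
def ArgData : List Ty → Type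
  | [] => PUnit
  | σ :: l => ((σ.sem → Tm) × Tm) × ArgData l

/-- The conjunction list `x_k ≐_{σ_k} (↓_{σ_k} b_k), …` for a tuple `b`. -/
def eqConj : (l : List Ty) → ArgData l → ℕ → Tup l → List Tm
  | [], _, _, _ => []
  | σ :: l, (d, ds), k, (b, bs) =>
      (.app (.app d.2 (vr k σ)) (d.1 b)) :: eqConj l ds (k + 1) bs

/-- `λ x_k : σ_k. …` binding one variable for each type in the list. -/
def mkLams : (l : List Ty) → ℕ → Tm → Tm
  | [], _, body => body
  | σ :: l, k, body => .lam k σ (mkLams l (k + 1) body)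

/-- The body of the quote term
`↓_{σ₁…σₙB} a := λx₁…xₙ. ⋁_{b₁…bₙ, a b₁…bₙ = 1} ⋀_j x_j ≐_{σ_j} (↓_{σ_j} b_j)`. -/
noncomputable def quoteBodyAux (σ : Ty) (ad : ArgData σ.args) (a : σ.sem) : Tm :=
  mkLams σ.args 0 (orList
    ((((Finset.univ : Finset (Tup σ.args)).toList.filter
        (fun b => σ.applyTup a b))).map
      (fun b => andList (eqConj σ.args ad 0 b))))

/-- `∀σ := λf. ⋀_{a ∈ Bσ} f (↓σ a)`, given the quote function for `σ`. -/
noncomputable def allTmAux (σ : Ty) (q : σ.sem → Tm) : Tm :=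
  .lam 0 (.arrow σ .base)
    (andList (((Finset.univ : Finset σ.sem).toList).map
      (fun a => .app (vr 0 (.arrow σ .base)) (q a))))

mutual
  /-- The quote function `↓σ` together with the identity term `≐σ`. -/
  noncomputable def quoteEq : (σ : Ty) → ((σ.sem → Tm) × Tm)
    | .base =>
        (fun a => quoteBodyAux .base PUnit.unit a,
         .lam 0 .base (.lam 1 .base (equivTm (vr 0 .base) (vr 1 .base))))
    | .arrow σ τ =>
        (fun a => quoteBodyAux (.arrow σ τ) ((quoteEq σ, argData τ) : ArgData (σ :: τ.args)) a,
         .lam 0 (.arrow σ τ) (.lam 1 (.arrow σ τ)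
           (.app (allTmAux σ (quoteEq σ).1)
             (.lam 2 σ
               (.app (.app (quoteEq τ).2
                  (.app (vr 0 (.arrow σ τ)) (vr 2 σ)))
                (.app (vr 1 (.arrow σ τ)) (vr 2 σ)))))))
  /-- Quote/identity data for all argument types of a type. -/
  noncomputable def argData : (σ : Ty) → ArgData σ.args
    | .base => PUnit.unit
    | .arrow σ τ => ((quoteEq σ, argData τ) : ArgData (σ :: τ.args))
end

/-- The quote function `↓σ : Bσ → Λ`. -/
noncomputable def quote (σ : Ty) (a : σ.sem) : Tm := (quoteEq σ).1 a

/-- The term `≐σ : σσB` denoting the identity predicate on `Bσ`. -/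
noncomputable def eqTm (σ : Ty) : Tm := (quoteEq σ).2

/-- The term `∀σ : (σB)B`. -/
noncomputable def allTm (σ : Ty) : Tm := allTmAux σ (quote σ)


/-- Propositional formulas: `s ::= x | ⊥ | s → s` with `x` a variable of type `B`. -/
inductive Propositional : Tm → Prop
  | var (n : ℕ) : Propositional (vr n .base)
  | bot : Propositional botTm
  | imp {s t} : Propositional s → Propositional t → Propositional (impTm s t)

/-- A type-respecting substitution of terms for variables. -/
def IsSubstitution (ρ : ℕ × Ty → Tm) : Prop := ∀ n σ, HasTy (ρ (n, σ)) σ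

/-- A formula is tautologous if it is a substitution instance of a tautology
(a valid propositional formula). -/
def Tautologous (s : Tm) : Prop :=
  ∃ t ρ, Propositional t ∧ ValidFml t ∧ IsSubstitution ρ ∧ s = substAux ρ t

/-- The proof system: Triv, Weak, Ded, MP, DN, Lam and Boolean replacement (BR).
Sequents consist of a finite set of formulas and a formula. -/
inductive Ded : Finset Tm → Tm → Prop
  | triv {A s} : (∀ t ∈ A, HasTy t .base) → HasTy s .base → Ded (insert s A) s
  | weak {A s t} : HasTy s .base → Ded A t → Ded (insert s A) t
  | ded {A s t} : Ded (insert s A) t → Ded A (impTm s t)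
  | mp {A s t} : Ded A (impTm s t) → Ded A s → Ded A t
  | dn {A s} : Ded A (negTm (negTm s)) → Ded A s
  | lam {A s t} : Ded A s → LamEq s t → HasTy t .base → Ded A t
  | br {A s t} (C : Ctx) : C.Admissible A → Ded A (equivTm s t) →
      Ded A (C.fill s) → HasTy (C.fill t) .base → Ded A (C.fill t)


/-! ### Auxiliary development for Taut -/

namespace TautAux

/-- Abstract propositional formulas with natural-number atoms. -/

inductive PF : Type
  | atom : ℕ → PF
  | fls : PF
  | imp : PF → PF → PF

def PF.toTm (u : ℕ → Tm) : PF → Tm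
  | .atom n => u n
  | .fls => botTm
  | .imp a b => impTm (a.toTm u) (b.toTm u)

def PF.beval (v : ℕ → Bool) : PF → Bool
  | .atom n => v n
  | .fls => false
  | .imp a b => !(a.beval v) || b.beval v

def PF.vars : PF → List ℕ
  | .atom n => [n]
  | .fls => []
  | .imp a b => a.vars ++ b.vars

lemma hasTy_bot : HasTy botTm .base := HasTy.name .bot

lemma hasTy_imp {s t : Tm} (hs : HasTy s .base) (ht : HasTy t .base) :
    HasTy (impTm s t) .base :=
  HasTy.app (HasTy.app (HasTy.name .imp) hs) ht

lemma hasTy_neg {s : Tm} (hs : HasTy s .base) : HasTy (negTm s) .base :=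
  hasTy_imp hs hasTy_bot

lemma pf_hasTy (u : ℕ → Tm) (hu : ∀ n, HasTy (u n) .base) (f : PF) :
    HasTy (f.toTm u) .base := by
  induction f with
  | atom n => exact hu n
  | fls => exact hasTy_bot
  | imp a b iha ihb => exact hasTy_imp iha ihb

/-- Triv for a member of the context. -/
lemma ded_triv' {A : Finset Tm} {s : Tm} (hA : ∀ t ∈ A, HasTy t .base)
    (hs : s ∈ A) : Ded A s := by
  have hty := hA s hs
  rw [← Finset.insert_eq_self.mpr hs]
  exact Ded.triv hA hty

/-- Monotonicity (weakening to a superset). -/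
lemma ded_mono {A B : Finset Tm} {t : Tm} (h : Ded A t) (hAB : A ⊆ B)
    (hB : ∀ r ∈ B, HasTy r .base) : Ded B t := by
  have key : ∀ S : Finset Tm, (∀ r ∈ S, HasTy r .base) → Ded (S ∪ A) t := by
    intro S
    induction S using Finset.induction_on with
    | empty => intro _; simpa using h
    | @insert a S ha ih =>
        intro hS
        rw [Finset.insert_union]
        exact Ded.weak (hS a (Finset.mem_insert_self a S))
          (ih fun r hr => hS r (Finset.mem_insert_of_mem hr))
  have := key B hB
  rwa [Finset.union_eq_left.mpr hAB] at this

lemma ded_exfalso {A : Finset Tm} {t : Tm} (hA : ∀ r ∈ A, HasTy r .base)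
    (ht : HasTy t .base) (h : Ded A botTm) : Ded A t :=
  Ded.dn (Ded.ded (Ded.weak (hasTy_neg ht) h))

/-- Case analysis: from `A, p ⊢ q` and `A, ¬p ⊢ q` infer `A ⊢ q`. -/
lemma ded_cases {A : Finset Tm} {p q : Tm} (hA : ∀ r ∈ A, HasTy r .base)
    (hp : HasTy p .base) (hq : HasTy q .base)
    (h1 : Ded (insert p A) q) (h2 : Ded (insert (negTm p) A) q) : Ded A q := by
  apply Ded.dn
  apply Ded.ded
  set B := insert (negTm q) A with hBdef
  have hB : ∀ r ∈ B, HasTy r .base := by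
    intro r hr
    rcases Finset.mem_insert.mp hr with h | h
    · subst h; exact hasTy_neg hq
    · exact hA r h
  have hnq : Ded B (negTm q) := ded_triv' hB (Finset.mem_insert_self _ _)
  have hpq : Ded B (impTm p q) :=
    ded_mono (Ded.ded h1) (Finset.subset_insert _ _) hB
  have hnpq : Ded B (impTm (negTm p) q) :=
    ded_mono (Ded.ded h2) (Finset.subset_insert _ _) hB
  have hnp : Ded B (negTm p) := by
    apply Ded.ded
    have hp' : Ded (insert p B) p := Ded.triv hB hp
    have hqB : Ded (insert p B) q := Ded.mp (Ded.weak hp hpq) hp'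
    exact Ded.mp (Ded.weak hp hnq) hqB
  exact Ded.mp hnq (Ded.mp hnpq hnp)

/-- Literals determined by a boolean assignment. -/
def lit (u : ℕ → Tm) (v : ℕ → Bool) (n : ℕ) : Tm :=
  if v n then u n else negTm (u n)

def litCtx (u : ℕ → Tm) (v : ℕ → Bool) (L : List ℕ) : Finset Tm :=
  (L.map (lit u v)).toFinset

lemma lit_hasTy (u : ℕ → Tm) (hu : ∀ n, HasTy (u n) .base) (v : ℕ → Bool)
    (n : ℕ) : HasTy (lit u v n) .base := by
  unfold lit; split
  · exact hu n
  · exact hasTy_neg (hu n)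

lemma litCtx_hasTy (u : ℕ → Tm) (hu : ∀ n, HasTy (u n) .base) (v : ℕ → Bool)
    (L : List ℕ) : ∀ r ∈ litCtx u v L, HasTy r .base := by
  intro r hr
  rw [litCtx, List.mem_toFinset, List.mem_map] at hr
  obtain ⟨n, _, rfl⟩ := hr
  exact lit_hasTy u hu v n

lemma litCtx_cons (u : ℕ → Tm) (v : ℕ → Bool) (n : ℕ) (L : List ℕ) :
    litCtx u v (n :: L) = insert (lit u v n) (litCtx u v L) := by
  simp [litCtx]

lemma litCtx_update (u : ℕ → Tm) (v : ℕ → Bool) (n : ℕ) (b : Bool)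
    (L : List ℕ) (hn : n ∉ L) :
    litCtx u (Function.update v n b) L = litCtx u v L := by
  unfold litCtx
  congr 1
  apply List.map_congr_left
  intro m hm
  have : m ≠ n := fun h => hn (h ▸ hm)
  simp [lit, Function.update_of_ne this]

/-- Kalmár's lemma. -/
lemma kalmar (u : ℕ → Tm) (hu : ∀ n, HasTy (u n) .base) (v : ℕ → Bool)
    (f : PF) (L : List ℕ) (hL : ∀ n ∈ f.vars, n ∈ L) :
    Ded (litCtx u v L) (cond (f.beval v) (f.toTm u) (negTm (f.toTm u))) := by
  have hC := litCtx_hasTy u hu v L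
  induction f with
  | atom n =>
      have hn : n ∈ L := hL n (by simp [PF.vars])
      have hmem : lit u v n ∈ litCtx u v L := by
        rw [litCtx, List.mem_toFinset, List.mem_map]; exact ⟨n, hn, rfl⟩
      have := ded_triv' hC hmem
      unfold lit at this
      cases hv : v n with
      | true => simpa [PF.beval, PF.toTm, hv] using this
      | false => simpa [PF.beval, PF.toTm, hv] using this
  | fls =>
      simp only [PF.beval, PF.toTm, cond_false]
      exact Ded.ded (Ded.triv hC hasTy_bot)
  | imp a b iha ihb =>
      have hLa : ∀ n ∈ a.vars, n ∈ L := fun n hn => hL n (by simp [PF.vars, hn])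
      have hLb : ∀ n ∈ b.vars, n ∈ L := fun n hn => hL n (by simp [PF.vars, hn])
      have iha := iha hLa
      have ihb := ihb hLb
      have hta : HasTy (a.toTm u) .base := pf_hasTy u hu a
      have htb : HasTy (b.toTm u) .base := pf_hasTy u hu b
      have hC' : ∀ r ∈ insert (a.toTm u) (litCtx u v L), HasTy r .base := by
        intro r hr
        rcases Finset.mem_insert.mp hr with h | h
        · subst h; exact hta
        · exact hC r h
      cases ha : a.beval v with
      | false =>
          simp only [PF.beval, PF.toTm, ha, Bool.not_false, Bool.true_or, cond_true]
          apply Ded.ded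
          apply ded_exfalso hC' htb
          rw [ha, cond_false] at iha
          exact Ded.mp (Ded.weak hta iha) (Ded.triv hC hta)
      | true =>
          rw [ha, cond_true] at iha
          cases hb : b.beval v with
          | true =>
              rw [hb, cond_true] at ihb
              simp only [PF.beval, PF.toTm, ha, hb, Bool.not_true, Bool.false_or, cond_true]
              exact Ded.ded (Ded.weak hta ihb)
          | false =>
              rw [hb, cond_false] at ihb
              simp only [PF.beval, PF.toTm, ha, hb, Bool.not_true, Bool.false_or, cond_false]
              apply Ded.ded
              have hCi : ∀ r ∈ insert (impTm (a.toTm u) (b.toTm u)) (litCtx u v L),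
                  HasTy r .base := by
                intro r hr
                rcases Finset.mem_insert.mp hr with h | h
                · subst h; exact hasTy_imp hta htb
                · exact hC r h
              have h1 : Ded (insert (impTm (a.toTm u) (b.toTm u)) (litCtx u v L))
                  (impTm (a.toTm u) (b.toTm u)) := Ded.triv hC (hasTy_imp hta htb)
              have h2 : Ded (insert (impTm (a.toTm u) (b.toTm u)) (litCtx u v L))
                  (b.toTm u) := Ded.mp h1 (Ded.weak (hasTy_imp hta htb) iha)
              exact Ded.mp (Ded.weak (hasTy_imp hta htb) ihb) h2

/-- Elimination of the assignment hypotheses. -/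
lemma elimVars (u : ℕ → Tm) (hu : ∀ n, HasTy (u n) .base) (f : PF) :
    ∀ L : List ℕ, L.Nodup → (∀ v, Ded (litCtx u v L) (f.toTm u)) →
      Ded ∅ (f.toTm u)
  | [], _, h => by simpa [litCtx] using h (fun _ => true)
  | n :: L, hnd, h => by
      have hn : n ∉ L := (List.nodup_cons.mp hnd).1
      apply elimVars u hu f L (List.nodup_cons.mp hnd).2
      intro v
      have h1 := h (Function.update v n true)
      have h2 := h (Function.update v n false)
      rw [litCtx_cons, litCtx_update u v n true L hn] at h1
      rw [litCtx_cons, litCtx_update u v n false L hn] at h2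
      have e1 : lit u (Function.update v n true) n = u n := by
        simp [lit, Function.update_self]
      have e2 : lit u (Function.update v n false) n = negTm (u n) := by
        simp [lit, Function.update_self]
      rw [e1] at h1
      rw [e2] at h2
      exact ded_cases (litCtx_hasTy u hu v L) (hu n) (pf_hasTy u hu f) h1 h2

/-- Reading back a propositional term as an abstract formula. -/
def pfOf : Tm → PF
  | .app (.app (.name .imp) a) b => .imp (pfOf a) (pfOf b)
  | .name (.var n _) => .atom n
  | _ => .fls

lemma pfOf_subst {ρ : ℕ × Ty → Tm} {t : Tm} (hp : Propositional t) :
    (pfOf t).toTm (fun n => ρ (n, .base)) = substAux ρ t := by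
  induction hp with
  | var n => simp [pfOf, PF.toTm, vr, substAux]
  | bot => simp [pfOf, PF.toTm, botTm, substAux]
  | @imp a b hpa hpb iha ihb =>
      show PF.toTm _ (pfOf (.app (.app (.name .imp) a) b)) = _
      rw [pfOf]
      show impTm _ _ = _
      rw [iha, ihb]
      simp [impTm, substAux]

/-- The interpretation induced by a boolean assignment. -/
def boolInterp (v : ℕ → Bool) : Interp := fun n σ =>
  match σ with
  | .base => v n
  | .arrow _ _ => default

lemma typeOf_prop {t : Tm} (hp : Propositional t) : typeOf t = some .base := by
  induction hp with
  | var n => simp [vr, typeOf, Name.ty]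
  | bot => simp [botTm, typeOf, Name.ty]
  | @imp a b hpa hpb iha ihb =>
      show typeOf (.app (.app (.name .imp) a) b) = some .base
      simp [typeOf, iha, ihb, Name.ty]

lemma eval_app_of (I : Interp) (s t : Tm) (σ τ : Ty) (h : typeOf t = some τ) :
    eval I (.app s t) σ = eval I s (.arrow τ σ) (eval I t τ) := by
  change (match typeOf t with
      | some τ => eval I s (.arrow τ σ) (eval I t τ)
      | none => default) = _
  rw [h]

lemma eval_prop {t : Tm} (hp : Propositional t) (v : ℕ → Bool) :
    eval (boolInterp v) t .base = (pfOf t).beval v := by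
  induction hp with
  | var n => rfl
  | bot => rfl
  | @imp a b hpa hpb iha ihb =>
      show eval (boolInterp v) (.app (.app (.name .imp) a) b) .base = _
      rw [eval_app_of _ _ _ _ _ (typeOf_prop hpb), eval_app_of _ _ _ _ _ (typeOf_prop hpa)]
      rw [iha, ihb]
      rfl

end TautAux

open TautAux in
/-- Taut: every tautologous formula is deducible. -/
theorem taut (s : Tm) (h : Tautologous s) : Ded ∅ s := by
  obtain ⟨t, ρ, hp, hval, hρ, rfl⟩ := h
  set u : ℕ → Tm := fun n => ρ (n, .base) with hu_def
  have hu : ∀ n, HasTy (u n) .base := fun n => hρ n .base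
  rw [← pfOf_subst hp]
  apply elimVars u hu (pfOf t) (pfOf t).vars.dedup (List.nodup_dedup _)
  intro v
  have hb : (pfOf t).beval v = true := by
    have hv := hval (boolInterp v)
    rwa [Satisfies, eval_prop hp v] at hv
  have hk := kalmar u hu v (pfOf t) ((pfOf t).vars.dedup)
    (fun n hn => List.mem_dedup.mpr hn)
  rwa [hb, cond_true] at hk

end PTT
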